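/- Let J be an invertible n×n complex matrix with J² = αI, α ≠ 0, let W₀ ∈ Mₙ(ℂ), and let B : Mₙ(ℂ) → Mₙ(ℂ) satisfy B(W)ᴴJ + JB(W) = 0 for all W. Suppose Q : ℝ → Mₙ(ℂ) is differentiable and satisfies Q'(t) = Q(t)·B(Q(t)ᴴ W₀ J Q(t) J⁻¹)ᴴ for all t. Then the curve W(t) := Q(t)ᴴ W₀ J Q(t) J⁻¹ satisfies the isospectral equation W'(t) = [B(W(t)), W(t)]. -/

import Mathlib

set_option maxHeartbeats 1000000


open Matrix

attribute [local instance] Matrix.frobeniusNormedAddCommGroup Matrix.frobeniusNormedSpace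

attribute [local instance] Matrix.frobeniusNormedRing Matrix.frobeniusNormedAlgebra

/-- If `J² = αI` with `α ≠ 0`, `B` takes values in the `J`-quadratic Lie algebra, and
`Q' = Q·B(Qᴴ W₀ J Q J⁻¹)ᴴ`, then `W := Qᴴ W₀ J Q J⁻¹` satisfies the isospectral
equation `W' = [B(W), W]`. -/
theorem stmt_8 (n : ℕ) (J W₀ : Matrix (Fin n) (Fin n) ℂ) (α : ℂ) (hα : α ≠ 0)
    (hJ : IsUnit J) (hJ2 : J ^ 2 = α • (1 : Matrix (Fin n) (Fin n) ℂ))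
    (B : Matrix (Fin n) (Fin n) ℂ → Matrix (Fin n) (Fin n) ℂ)
    (hB : ∀ W : Matrix (Fin n) (Fin n) ℂ, (B W)ᴴ * J + J * B W = 0)
    (Q : ℝ → Matrix (Fin n) (Fin n) ℂ)
    (hQ : ∀ t : ℝ, HasDerivAt Q (Q t * (B ((Q t)ᴴ * W₀ * J * Q t * J⁻¹))ᴴ) t) :
    ∀ t : ℝ, HasDerivAt (fun t => (Q t)ᴴ * W₀ * J * Q t * J⁻¹)
      (B ((Q t)ᴴ * W₀ * J * Q t * J⁻¹) * ((Q t)ᴴ * W₀ * J * Q t * J⁻¹) -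
        ((Q t)ᴴ * W₀ * J * Q t * J⁻¹) * B ((Q t)ᴴ * W₀ * J * Q t * J⁻¹)) t := by
  intro t
  set Wt := (Q t)ᴴ * W₀ * J * Q t * J⁻¹ with hWt
  -- J⁻¹ = α⁻¹ • J
  have hJinv : J⁻¹ = α⁻¹ • J := by
    have h2 : J * J = α • 1 := by rw [← sq, hJ2]
    have : J * (α⁻¹ • J) = 1 := by
      rw [Matrix.mul_smul, h2, smul_smul, inv_mul_cancel₀ hα, one_smul]
    rw [Matrix.inv_eq_right_inv this]
  have hBW : (B Wt)ᴴ * J = -(J * B Wt) := by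
    exact eq_neg_of_add_eq_zero_left (hB Wt)
  have key : (B Wt)ᴴ * J⁻¹ = -(J⁻¹ * B Wt) := by
    rw [hJinv, Matrix.mul_smul, Matrix.smul_mul, hBW, smul_neg]
  -- derivative of Qᴴ
  have h1 : HasDerivAt (fun s => (Q s)ᴴ) (B Wt * (Q t)ᴴ) t := by
    have := (hQ t).star
    simp [star_eq_conjTranspose, conjTranspose_mul, conjTranspose_conjTranspose] at this
    exact this
  have h2 : HasDerivAt (fun s => (Q s)ᴴ * W₀ * J)
      (B Wt * (Q t)ᴴ * W₀ * J) t := by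
    exact (h1.mul_const W₀).mul_const J
  have h3 : HasDerivAt (fun s => (Q s)ᴴ * W₀ * J * Q s)
      (B Wt * (Q t)ᴴ * W₀ * J * Q t + (Q t)ᴴ * W₀ * J * (Q t * (B Wt)ᴴ)) t := by
    exact h2.mul (hQ t)
  have h4 := h3.mul_const J⁻¹
  refine HasDerivAt.congr_deriv h4 (Eq.symm ?_)
  rw [add_mul, sub_eq_iff_eq_add]
  have e1 : B Wt * (Q t)ᴴ * W₀ * J * Q t * J⁻¹ = B Wt * Wt := by
    simp [hWt, mul_assoc]
  have e2 : (Q t)ᴴ * W₀ * J * (Q t * (B Wt)ᴴ) * J⁻¹ = -(Wt * B Wt) := by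
    calc (Q t)ᴴ * W₀ * J * (Q t * (B Wt)ᴴ) * J⁻¹
        = (Q t)ᴴ * W₀ * J * Q t * ((B Wt)ᴴ * J⁻¹) := by
          simp only [mul_assoc]
      _ = (Q t)ᴴ * W₀ * J * Q t * (-(J⁻¹ * B Wt)) := by rw [key]
      _ = -(Wt * B Wt) := by rw [hWt]; simp only [mul_assoc, mul_neg, neg_inj]
  rw [e1, e2]
  abel
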